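/- There exist pdfs f_n and f on [0,1] and a sequence α_n ↓ 1 such that f_n → f almost everywhere, sup_n ∫₀¹ f_n·(|log f_n|)^{α_n} dx < ∞, yet H(f_n) does not converge to H(f). -/

import Mathlib

open MeasureTheory Filter


lemma step_lintegral (ε a b : ℝ) (h0 : 0 ≤ ε) (h1 : ε ≤ 1) (ha : 0 ≤ a) (hb : 0 ≤ b) :
    ∫⁻ x in Set.Icc (0:ℝ) 1, ENNReal.ofReal (if x ≤ ε then a else b)
      = ENNReal.ofReal (a * ε + b * (1 - ε)) := by
  rw [← Set.Icc_union_Ioc_eq_Icc h0 h1,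
    lintegral_union measurableSet_Ioc (by rw [Set.disjoint_left]; rintro x hx hx2; exact absurd hx.2 (not_le.2 hx2.1))]
  have e1 : ∫⁻ x in Set.Icc (0:ℝ) ε, ENNReal.ofReal (if x ≤ ε then a else b)
      = ENNReal.ofReal a * ENNReal.ofReal ε := by
    rw [setLIntegral_congr_fun measurableSet_Icc
      (fun x hx => by rw [if_pos hx.2])]
    simp [Real.volume_Icc, h0]
  have e2 : ∫⁻ x in Set.Ioc ε 1, ENNReal.ofReal (if x ≤ ε then a else b)
      = ENNReal.ofReal b * ENNReal.ofReal (1 - ε) := by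
    rw [setLIntegral_congr_fun measurableSet_Ioc
      (fun x hx => by rw [if_neg (not_le.2 hx.1)])]
    simp [Real.volume_Ioc]
  rw [e1, e2, ← ENNReal.ofReal_mul ha, ← ENNReal.ofReal_mul hb,
    ENNReal.ofReal_add (by positivity) (mul_nonneg hb (by linarith))]

lemma step_integral (ε a b : ℝ) (h0 : 0 ≤ ε) (h1 : ε ≤ 1) :
    ∫ x in Set.Icc (0:ℝ) 1, (if x ≤ ε then a else b) = a * ε + b * (1 - ε) := by
  have hi1 : IntegrableOn (fun x => if x ≤ ε then a else b) (Set.Icc (0:ℝ) ε) :=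
    (integrableOn_const (C := a) (by simp [Real.volume_Icc])).congr_fun
      (fun x hx => by rw [if_pos hx.2]) measurableSet_Icc
  have hi2 : IntegrableOn (fun x => if x ≤ ε then a else b) (Set.Ioc ε 1) :=
    (integrableOn_const (C := b) (by simp [Real.volume_Ioc])).congr_fun
      (fun x hx => by rw [if_neg (not_le.2 hx.1)]) measurableSet_Ioc
  rw [← Set.Icc_union_Ioc_eq_Icc h0 h1,
    setIntegral_union (by rw [Set.disjoint_left]; rintro x hx hx2; exact absurd hx.2 (not_le.2 hx2.1)) measurableSet_Ioc hi1 hi2]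
  have e1 : ∫ x in Set.Icc (0:ℝ) ε, (if x ≤ ε then a else b) = a * ε := by
    rw [setIntegral_congr_fun measurableSet_Icc (fun x hx => by rw [if_pos hx.2])]
    simp [Real.volume_Icc, h0, mul_comm]
  have e2 : ∫ x in Set.Ioc ε 1, (if x ≤ ε then a else b) = b * (1 - ε) := by
    rw [setIntegral_congr_fun measurableSet_Ioc (fun x hx => by rw [if_neg (not_le.2 hx.1)])]
    simp [Real.volume_Ioc, mul_comm, h1]
  rw [e1, e2]

noncomputable def Nn (n : ℕ) : ℝ := (n : ℝ) + 2
noncomputable def en (n : ℕ) : ℝ := Real.exp (-(Nn n)) / Nn n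
noncomputable def cn (n : ℕ) : ℝ := (1 - 1 / Nn n) / (1 - en n)
noncomputable def fn (n : ℕ) (x : ℝ) : ℝ := if x ≤ en n then Real.exp (Nn n) else cn n
noncomputable def an (n : ℕ) : ℝ := 1 + 1 / Real.log (Nn n)

lemma hN2 (n : ℕ) : 2 ≤ Nn n := by unfold Nn; have : (0:ℝ) ≤ (n:ℝ) := Nat.cast_nonneg n; linarith
lemma hNpos (n : ℕ) : 0 < Nn n := lt_of_lt_of_le two_pos (hN2 n)
lemma hlogN (n : ℕ) : 0 < Real.log (Nn n) := Real.log_pos (by linarith [hN2 n])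
lemma he_pos (n : ℕ) : 0 < en n := div_pos (Real.exp_pos _) (hNpos n)
lemma he_le (n : ℕ) : en n ≤ 1 / Nn n := by
  have h : Real.exp (-(Nn n)) ≤ 1 := Real.exp_le_one_iff.2 (by linarith [hN2 n])
  unfold en
  rw [div_le_div_iff₀ (hNpos n) (hNpos n)]
  nlinarith [hNpos n]
lemma he_le_half (n : ℕ) : en n ≤ 1 / 2 :=
  (he_le n).trans (by rw [div_le_div_iff₀ (hNpos n) two_pos]; linarith [hN2 n])
lemma hc_den_pos (n : ℕ) : 0 < 1 - en n := by linarith [he_le_half n]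
lemma hc_le_one (n : ℕ) : cn n ≤ 1 := by
  rw [cn, div_le_one (hc_den_pos n)]
  linarith [he_le n]
lemma hc_ge_half (n : ℕ) : 1 / 2 ≤ cn n := by
  have h1 : 1 / Nn n ≤ 1 / 2 := by
    rw [div_le_div_iff₀ (hNpos n) two_pos]; linarith [hN2 n]
  rw [cn, le_div_iff₀ (hc_den_pos n)]
  nlinarith [he_pos n, he_le_half n]
lemma hc_pos (n : ℕ) : 0 < cn n := lt_of_lt_of_le (by norm_num) (hc_ge_half n)

lemma tendN : Tendsto Nn atTop atTop := by
  unfold Nn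
  exact tendsto_atTop_add_const_right atTop 2 tendsto_natCast_atTop_atTop

lemma tend_invN : Tendsto (fun n => 1 / Nn n) atTop (nhds 0) := by
  simpa [one_div, Function.comp_def] using tendsto_inv_atTop_zero.comp tendN

lemma tend_en : Tendsto en atTop (nhds 0) := by
  have h1 : Tendsto (fun n => Real.exp (-(Nn n))) atTop (nhds 0) :=
    Real.tendsto_exp_atBot.comp (tendsto_neg_atTop_atBot.comp tendN)
  have := h1.mul tend_invN
  rw [zero_mul] at this
  refine this.congr (fun n => ?_)
  simp [en, div_eq_mul_inv]

lemma tend_cn : Tendsto cn atTop (nhds 1) := by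
  have hnum : Tendsto (fun n => 1 - 1 / Nn n) atTop (nhds 1) := by
    simpa using tendsto_const_nhds.sub tend_invN
  have hden : Tendsto (fun n => 1 - en n) atTop (nhds 1) := by
    simpa using tendsto_const_nhds.sub tend_en
  have := hnum.div hden one_ne_zero
  simp only [div_one] at this
  exact this.congr (fun n => rfl)

lemma key1 (n : ℕ) : Real.exp (Nn n) * Nn n * en n = 1 := by
  have h := Real.exp_neg (Nn n)
  rw [en, h]
  field_simp
  rw [div_self (hNpos n).ne']

lemma key2 (n : ℕ) : Real.exp (Nn n) * (Nn n) ^ (an n) * en n = Real.exp 1 := by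
  have h1 : (Nn n) ^ (an n) = Nn n * Real.exp 1 := by
    rw [Real.rpow_def_of_pos (hNpos n), an]
    rw [mul_add, mul_one, mul_one_div, div_self (hlogN n).ne', Real.exp_add, Real.exp_log (hNpos n)]
  have h := Real.exp_neg (Nn n)
  rw [h1, en, h]
  field_simp
  rw [div_self (hNpos n).ne']

lemma mass (n : ℕ) : Real.exp (Nn n) * en n + cn n * (1 - en n) = 1 := by
  have h2 : cn n * (1 - en n) = 1 - 1 / Nn n := div_mul_cancel₀ _ (hc_den_pos n).ne'
  have h3 : Real.exp (Nn n) * en n = 1 / Nn n := by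
    rw [eq_div_iff (hNpos n).ne']
    linear_combination key1 n
  rw [h2, h3]; ring

lemma abs_log_cn_le (n : ℕ) : |Real.log (cn n)| ≤ 1 := by
  rw [abs_le]
  constructor
  · have h1 : Real.exp (-1) ≤ 1 / 2 := by
      rw [Real.exp_neg, inv_le_comm₀ (Real.exp_pos 1) (by norm_num)]
      nlinarith [Real.add_one_le_exp (1:ℝ)]
    have := Real.log_le_log (Real.exp_pos _) (h1.trans (hc_ge_half n))
    rwa [Real.log_exp] at this
  · exact (Real.log_nonpos (hc_pos n).le (hc_le_one n)).trans zero_le_one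

lemma an_pos (n : ℕ) : 0 < an n := by
  have := hlogN n
  unfold an
  positivity

lemma entropy_val (n : ℕ) :
    ∫ x in Set.Icc (0:ℝ) 1, fn n x * Real.log (fn n x)
      = 1 + cn n * Real.log (cn n) * (1 - en n) := by
  have hrw : ∀ x : ℝ, fn n x * Real.log (fn n x)
      = if x ≤ en n then Real.exp (Nn n) * Nn n else cn n * Real.log (cn n) := by
    intro x; unfold fn; split_ifs
    · rw [Real.log_exp]
    · rfl
  simp only [hrw]
  rw [step_integral (en n) _ _ (he_pos n).le (by linarith [he_le_half n]), key1 n]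

theorem entropy_stmt13 :
    ∃ (f : ℕ → ℝ → ℝ) (g : ℝ → ℝ) (α : ℕ → ℝ),
      (∀ n, Measurable (f n)) ∧ (∀ n x, 0 ≤ f n x) ∧
      (∀ n, ∫⁻ x in Set.Icc (0:ℝ) 1, ENNReal.ofReal (f n x) = 1) ∧
      Measurable g ∧ (∀ x, 0 ≤ g x) ∧
      (∫⁻ x in Set.Icc (0:ℝ) 1, ENNReal.ofReal (g x)) = 1 ∧
      (∀ n, 1 < α n) ∧ Antitone α ∧ Tendsto α atTop (nhds 1) ∧
      (∀ᵐ x ∂(volume.restrict (Set.Icc (0:ℝ) 1)),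
        Tendsto (fun n => f n x) atTop (nhds (g x))) ∧
      (∃ B : ℝ, ∀ n,
        ∫⁻ x in Set.Icc (0:ℝ) 1,
          ENNReal.ofReal (f n x * |Real.log (f n x)| ^ (α n)) ≤ ENNReal.ofReal B) ∧
      ¬ Tendsto (fun n => -∫ x in Set.Icc (0:ℝ) 1, f n x * Real.log (f n x)) atTop
          (nhds (-∫ x in Set.Icc (0:ℝ) 1, g x * Real.log (g x))) := by
  refine ⟨fn, fun _ => 1, an, ?_, ?_, ?_, measurable_const, fun _ => zero_le_one, ?_, ?_, ?_, ?_,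
    ?_, ?_, ?_⟩
  · -- measurability
    intro n
    exact Measurable.ite measurableSet_Iic measurable_const measurable_const
  · -- nonneg
    intro n x
    unfold fn; split_ifs
    · exact (Real.exp_pos _).le
    · exact (hc_pos n).le
  · -- pdf f
    intro n
    have := step_lintegral (en n) (Real.exp (Nn n)) (cn n) (he_pos n).le
      (by linarith [he_le_half n]) (Real.exp_pos _).le (hc_pos n).le
    simp only [fn]
    rw [this, mass n, ENNReal.ofReal_one]
  · -- pdf g
    rw [setLIntegral_const, ENNReal.ofReal_one, one_mul, Real.volume_Icc]
    norm_num
  · -- α > 1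
    intro n
    have := hlogN n
    unfold an
    have : 0 < 1 / Real.log (Nn n) := by positivity
    linarith
  · -- antitone
    intro m k h
    unfold an
    have hmk : Nn m ≤ Nn k := by
      unfold Nn
      have : (m:ℝ) ≤ (k:ℝ) := Nat.cast_le.2 h
      linarith
    have hm : Real.log (Nn m) ≤ Real.log (Nn k) := Real.log_le_log (hNpos m) hmk
    have := one_div_le_one_div_of_le (hlogN m) hm
    linarith
  · -- tendsto α
    have hlog : Tendsto (fun n => Real.log (Nn n)) atTop atTop := Real.tendsto_log_atTop.comp tendN
    have : Tendsto (fun n => 1 / Real.log (Nn n)) atTop (nhds 0) := by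
      simpa [one_div, Function.comp_def] using tendsto_inv_atTop_zero.comp hlog
    have h1 : Tendsto (fun n => 1 + 1 / Real.log (Nn n)) atTop (nhds (1 + 0)) :=
      tendsto_const_nhds.add this
    rw [add_zero] at h1
    exact h1
  · -- a.e. convergence
    have h0 : (volume.restrict (Set.Icc (0:ℝ) 1)) {(0:ℝ)} = 0 := by
      rw [Measure.restrict_apply (measurableSet_singleton 0)]
      exact measure_mono_null Set.inter_subset_left (Real.volume_singleton)
    have hne : ∀ᵐ x ∂(volume.restrict (Set.Icc (0:ℝ) 1)), x ≠ 0 := by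
      rw [ae_iff]
      convert h0 using 2
      ext x; simp
    filter_upwards [hne, ae_restrict_mem measurableSet_Icc] with x hx hmem
    have hxpos : 0 < x := lt_of_le_of_ne hmem.1 (Ne.symm hx)
    have hev : ∀ᶠ n in atTop, en n < x := tend_en.eventually_lt_const hxpos
    refine tend_cn.congr' (hev.mono fun n hn => ?_)
    simp only [fn, if_neg (not_le.2 hn)]
  · -- moment bound
    refine ⟨Real.exp 1 + 1, fun n => ?_⟩
    have hrw : ∀ x : ℝ, fn n x * |Real.log (fn n x)| ^ an n
        = if x ≤ en n then Real.exp (Nn n) * |Real.log (Real.exp (Nn n))| ^ an n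
          else cn n * |Real.log (cn n)| ^ an n := by
      intro x; unfold fn; split_ifs <;> rfl
    simp only [hrw]
    rw [step_lintegral (en n) _ _ (he_pos n).le (by linarith [he_le_half n])
      (mul_nonneg (Real.exp_pos _).le (Real.rpow_nonneg (abs_nonneg _) _))
      (mul_nonneg (hc_pos n).le (Real.rpow_nonneg (abs_nonneg _) _))]
    apply ENNReal.ofReal_le_ofReal
    have h1 : Real.exp (Nn n) * |Real.log (Real.exp (Nn n))| ^ an n * en n = Real.exp 1 := by
      rw [Real.log_exp, abs_of_pos (hNpos n)]
      exact key2 n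
    have h2 : cn n * |Real.log (cn n)| ^ an n * (1 - en n) ≤ 1 := by
      have hr : |Real.log (cn n)| ^ an n ≤ 1 :=
        Real.rpow_le_one (abs_nonneg _) (abs_log_cn_le n) (an_pos n).le
      have hbn : (0:ℝ) ≤ 1 - en n := by linarith [he_le_half n]
      have hb : (1:ℝ) - en n ≤ 1 := by linarith [he_pos n]
      have ha : cn n * |Real.log (cn n)| ^ an n ≤ 1 :=
        mul_le_one₀ (hc_le_one n) (Real.rpow_nonneg (abs_nonneg _) _) hr
      have han : 0 ≤ cn n * |Real.log (cn n)| ^ an n :=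
        mul_nonneg (hc_pos n).le (Real.rpow_nonneg (abs_nonneg _) _)
      nlinarith
    linarith [h1, h2]
  · -- entropy does not converge
    intro hcon
    have hg : (∫ x in Set.Icc (0:ℝ) 1, (1:ℝ) * Real.log 1) = 0 := by simp
    rw [hg, neg_zero] at hcon
    have tlog : Tendsto (fun n => Real.log (cn n)) atTop (nhds 0) := by
      have := (Real.continuousAt_log one_ne_zero).tendsto.comp tend_cn
      simpa [Function.comp_def] using this
    have t2 : Tendsto (fun n => cn n * Real.log (cn n) * (1 - en n)) atTop (nhds 0) := by
      have hden : Tendsto (fun n => 1 - en n) atTop (nhds (1 - 0)) :=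
        tendsto_const_nhds.sub tend_en
      have := (tend_cn.mul tlog).mul hden
      simpa using this
    have t3 : Tendsto (fun n => -∫ x in Set.Icc (0:ℝ) 1, fn n x * Real.log (fn n x))
        atTop (nhds (-1)) := by
      have hadd : Tendsto (fun n => 1 + cn n * Real.log (cn n) * (1 - en n)) atTop (nhds (1 + 0)) :=
        tendsto_const_nhds.add t2
      have := hadd.neg
      simp only [add_zero] at this
      refine this.congr fun n => ?_
      rw [entropy_val n]
    have : (-1 : ℝ) = 0 := tendsto_nhds_unique t3 hcon
    norm_num at this
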